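/- Let P₁, P₂, … be a strongly stationary sequence of random variables with common marginal CDF F and empirical CDF Fₙ(x) = (1/n)·#{ i ≤ n : Pᵢ ≤ x }. Then the condition: for every x, (1/n²)·Σ_{1 ≤ i ≠ j ≤ n} ( P(Pᵢ ≤ x, Pⱼ ≤ x) - F(x)² ) → 0 as n → ∞, is necessary and sufficient for: for every x, Fₙ(x) → F(x) in probability as n → ∞. -/

import Mathlib

open Filter MeasureTheory Set ProbabilityTheory

/-- Empirical CDF of the first `n` among a sequence of random variables. -/
noncomputable def empCDF {Ω : Type*} (P : ℕ → Ω → ℝ) (n : ℕ) (ω : Ω) (x : ℝ) : ℝ :=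
  (((Finset.range n).filter (fun i => P i ω ≤ x)).card : ℝ) / (n : ℝ)

section Aux

variable {Ω : Type*} [MeasurableSpace Ω] (Pr : Measure Ω) [IsProbabilityMeasure Pr]

lemma empCDF_eq_sum (P : ℕ → Ω → ℝ) (n : ℕ) (ω : Ω) (x : ℝ) :
    empCDF P n ω x = (∑ i ∈ Finset.range n, if P i ω ≤ x then (1:ℝ) else 0) / n := by
  rw [empCDF, Finset.card_filter]
  push_cast
  rfl

lemma empCDF_nonneg (P : ℕ → Ω → ℝ) (n : ℕ) (ω : Ω) (x : ℝ) : 0 ≤ empCDF P n ω x := by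
  unfold empCDF; positivity

lemma empCDF_le_one (P : ℕ → Ω → ℝ) (n : ℕ) (ω : Ω) (x : ℝ) : empCDF P n ω x ≤ 1 := by
  unfold empCDF
  apply div_le_one_of_le₀
  · exact_mod_cast (Finset.card_filter_le _ _).trans (by simp)
  · positivity

/-- L² convergence to a constant is equivalent to convergence in measure, for uniformly
bounded functions. -/
lemma tendsto_integral_sq_iff_tendstoInMeasure
    (g : ℕ → Ω → ℝ) (hg : ∀ n, Measurable (g n))
    (h0 : ∀ n ω, 0 ≤ g n ω) (h1 : ∀ n ω, g n ω ≤ 1)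
    (c : ℝ) (hc0 : 0 ≤ c) (hc1 : c ≤ 1) :
    Tendsto (fun n => ∫ ω, (g n ω - c) ^ 2 ∂Pr) atTop (nhds 0) ↔
      TendstoInMeasure Pr g atTop (fun _ => c) := by
  have habs : ∀ n ω, |g n ω - c| ≤ 1 := by
    intro n ω
    rw [abs_le]
    constructor <;> nlinarith [h0 n ω, h1 n ω]
  have hint : ∀ n, Integrable (fun ω => (g n ω - c) ^ 2) Pr := by
    intro n
    refine (integrable_const (1:ℝ)).mono' ?_ ?_
    · exact (((hg n).sub measurable_const).pow_const 2).aestronglyMeasurable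
    · refine Filter.Eventually.of_forall fun ω => ?_
      rw [Real.norm_eq_abs, abs_of_nonneg (sq_nonneg _), ← sq_abs]
      nlinarith [habs n ω, abs_nonneg (g n ω - c)]
  constructor
  · intro hL2; rw [tendstoInMeasure_iff_dist]; intro ε hε
    have hsub : ∀ n, {ω | ε ≤ dist (g n ω) c} ⊆ {ω | ε ^ 2 ≤ (g n ω - c) ^ 2} := by
      intro n ω hω
      simp only [Set.mem_setOf_eq, Real.dist_eq] at hω ⊢
      calc ε ^ 2 ≤ |g n ω - c| ^ 2 := pow_le_pow_left₀ hε.le hω 2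
        _ = (g n ω - c) ^ 2 := sq_abs _
    have hbound : ∀ n, Pr {ω | ε ≤ dist (g n ω) c} ≤
        ENNReal.ofReal ((∫ ω, (g n ω - c) ^ 2 ∂Pr) / ε ^ 2) := by
      intro n
      have hmk := mul_meas_ge_le_integral_of_nonneg
        (Filter.Eventually.of_forall (fun ω => sq_nonneg (g n ω - c))) (hint n) (ε ^ 2)
      have hfin : Pr {ω | ε ^ 2 ≤ (g n ω - c) ^ 2} ≠ ⊤ := measure_ne_top _ _
      have : (Pr {ω | ε ^ 2 ≤ (g n ω - c) ^ 2}).toReal ≤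
          (∫ ω, (g n ω - c) ^ 2 ∂Pr) / ε ^ 2 := by
        rw [le_div_iff₀ (by positivity)]
        simp only [Measure.real] at hmk
        linarith [hmk]
      calc Pr {ω | ε ≤ dist (g n ω) c} ≤ Pr {ω | ε ^ 2 ≤ (g n ω - c) ^ 2} :=
            measure_mono (hsub n)
        _ = ENNReal.ofReal ((Pr {ω | ε ^ 2 ≤ (g n ω - c) ^ 2}).toReal) :=
            (ENNReal.ofReal_toReal hfin).symm
        _ ≤ ENNReal.ofReal ((∫ ω, (g n ω - c) ^ 2 ∂Pr) / ε ^ 2) := ENNReal.ofReal_le_ofReal this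
    have hR : Tendsto (fun n => ENNReal.ofReal ((∫ ω, (g n ω - c) ^ 2 ∂Pr) / ε ^ 2))
        atTop (nhds 0) := by
      have : Tendsto (fun n => (∫ ω, (g n ω - c) ^ 2 ∂Pr) / ε ^ 2) atTop (nhds 0) := by
        simpa using hL2.div_const (ε ^ 2)
      simpa [Function.comp_def] using (ENNReal.continuous_ofReal.tendsto 0).comp this
    exact tendsto_of_tendsto_of_tendsto_of_le_of_le tendsto_const_nhds hR
      (fun n => zero_le) hbound
  · intro hM; rw [tendstoInMeasure_iff_dist] at hM
    rw [Metric.tendsto_atTop]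
    intro ε hε
    set δ : ℝ := min 1 (ε / 2) with hδdef
    have hδ : 0 < δ := lt_min one_pos (by linarith)
    have hδ1 : δ ≤ 1 := min_le_left _ _
    have hδε : δ ≤ ε / 2 := min_le_right _ _
    set A : ℕ → Set Ω := fun n => {ω | δ ≤ |g n ω - c|} with hA
    have hmeaset : ∀ n, MeasurableSet (A n) := by
      intro n
      exact measurableSet_le measurable_const ((hg n).sub measurable_const).abs
    -- pointwise bound : (g-c)^2 ≤ δ^2 + indicator
    have hpt : ∀ n ω, (g n ω - c) ^ 2 ≤
        δ ^ 2 + Set.indicator (A n) (fun _ => (1:ℝ)) ω := by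
      intro n ω
      by_cases h : ω ∈ A n
      · rw [Set.indicator_of_mem h]
        have h' : δ ≤ |g n ω - c| := h
        nlinarith [habs n ω, abs_nonneg (g n ω - c), sq_abs (g n ω - c)]
      · rw [Set.indicator_of_notMem h]
        have h' : ¬ δ ≤ |g n ω - c| := h
        push_neg at h' 
        nlinarith [sq_abs (g n ω - c), abs_nonneg (g n ω - c), h']
    have hibound : ∀ n, ∫ ω, (g n ω - c) ^ 2 ∂Pr ≤
        δ ^ 2 + (Pr (A n)).toReal := by
      intro n
      have hintR : Integrable (fun ω => δ ^ 2 +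
          Set.indicator (A n) (fun _ => (1:ℝ)) ω) Pr := by
        exact (integrable_const _).add
          ((integrable_const (1:ℝ)).indicator (hmeaset n))
      calc ∫ ω, (g n ω - c) ^ 2 ∂Pr ≤ ∫ ω, (δ ^ 2 +
            Set.indicator (A n) (fun _ => (1:ℝ)) ω) ∂Pr :=
            integral_mono (hint n) hintR (hpt n)
        _ = δ ^ 2 + (Pr (A n)).toReal := by
            rw [integral_add (integrable_const _)
              ((integrable_const (1:ℝ)).indicator (hmeaset n)),
              integral_const, integral_indicator_const _ (hmeaset n)]
            simp [Measure.real]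
    have hmδ := hM δ hδ
    have htoReal : Tendsto (fun n => (Pr (A n)).toReal) atTop (nhds 0) := by
      have h2 : Tendsto (fun n => (Pr {ω | δ ≤ dist (g n ω) c}).toReal) atTop (nhds 0) := by
        simpa [Function.comp_def] using (ENNReal.tendsto_toReal (by simp)).comp hmδ
      have h3 : ∀ n, A n = {ω | δ ≤ dist (g n ω) c} := by
        intro n; ext ω; simp [hA, Real.dist_eq]
      simpa [h3] using h2
    have hev : ∀ᶠ n in atTop, (Pr (A n)).toReal < ε / 2 := by
      have := htoReal; rw [Metric.tendsto_atTop] at this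
      obtain ⟨N, hN⟩ := this (ε / 2) (by linarith)
      exact Filter.eventually_atTop.2 ⟨N, fun n hn => by
        have := hN n hn
        rw [Real.dist_eq, sub_zero] at this
        exact lt_of_le_of_lt (le_abs_self _) this⟩
    obtain ⟨N, hN⟩ := Filter.eventually_atTop.1 hev
    refine ⟨N, fun n hn => ?_⟩
    have h01 : 0 ≤ ∫ ω, (g n ω - c) ^ 2 ∂Pr :=
      integral_nonneg fun ω => sq_nonneg _
    rw [Real.dist_eq, sub_zero, abs_of_nonneg h01]
    have hδsq : δ ^ 2 ≤ ε / 2 := by nlinarith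
    calc ∫ ω, (g n ω - c) ^ 2 ∂Pr ≤ δ ^ 2 + (Pr (A n)).toReal := hibound n
      _ < ε / 2 + ε / 2 := by have := hN n hn; linarith
      _ = ε := by ring

end Aux

/-- For a strongly stationary sequence with common marginal CDF `F`, the condition
`(1/n²)·Σ_{i≠j≤n} (P(Pᵢ≤x, Pⱼ≤x) - F(x)²) → 0` for every `x` is necessary and
sufficient for `Fₙ(x) → F(x)` in probability for every `x`. -/
theorem empirical_cdf_convergence_iff_cov
    {Ω : Type*} [MeasurableSpace Ω] (Pr : Measure Ω) [IsProbabilityMeasure Pr]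
    (P : ℕ → Ω → ℝ) (hmeas : ∀ i, Measurable (P i))
    (F : ℝ → ℝ)
    (hcdf : ∀ i x, (Pr {ω | P i ω ≤ x}).toReal = F x)
    (hstat : Measure.map (fun ω => (fun i => P i ω : ℕ → ℝ)) Pr =
      Measure.map (fun ω => (fun i => P (i + 1) ω : ℕ → ℝ)) Pr) :
    (∀ x : ℝ, Tendsto (fun n : ℕ => (1 / (n : ℝ) ^ 2) *
        ∑ i ∈ Finset.range n, ∑ j ∈ Finset.range n,
          (if i ≠ j then (Pr {ω | P i ω ≤ x ∧ P j ω ≤ x}).toReal - F x ^ 2 else 0))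
      atTop (nhds 0)) ↔
    (∀ x : ℝ, TendstoInMeasure Pr (fun n ω => empCDF P n ω x) atTop
      (fun _ => F x)) := by
  have key : ∀ x : ℝ,
      Tendsto (fun n : ℕ => (1 / (n : ℝ) ^ 2) *
        ∑ i ∈ Finset.range n, ∑ j ∈ Finset.range n,
          (if i ≠ j then (Pr {ω | P i ω ≤ x ∧ P j ω ≤ x}).toReal - F x ^ 2 else 0))
        atTop (nhds 0) ↔
      TendstoInMeasure Pr (fun n ω => empCDF P n ω x) atTop (fun _ => F x) := by
    intro x
    have hf0 : 0 ≤ F x := by rw [← hcdf 0 x]; exact ENNReal.toReal_nonneg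
    have hf1 : F x ≤ 1 := by
      rw [← hcdf 0 x]
      exact ENNReal.toReal_le_of_le_ofReal one_pos.le (by simpa using prob_le_one)
    set f : ℝ := F x with hf
    have hms : ∀ i : ℕ, MeasurableSet {ω | P i ω ≤ x} := fun i =>
      measurableSet_le (hmeas i) measurable_const
    -- indicator function
    set X : ℕ → Ω → ℝ := fun i ω => if P i ω ≤ x then 1 else 0 with hX
    have hXmeas : ∀ i, Measurable (X i) := fun i =>
      Measurable.ite (hms i) measurable_const measurable_const
    have hXint : ∀ i, Integrable (X i) Pr := by
      intro i
      have : X i = Set.indicator {ω | P i ω ≤ x} (fun _ => (1:ℝ)) := by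
        funext ω; simp [hX, Set.indicator_apply]
      rw [this]
      exact (integrable_const (1:ℝ)).indicator (hms i)
    have hXmul : ∀ i j, (fun ω => X i ω * X j ω) =
        Set.indicator {ω | P i ω ≤ x ∧ P j ω ≤ x} (fun _ => (1:ℝ)) := by
      intro i j
      funext ω
      by_cases hi : P i ω ≤ x <;> by_cases hj : P j ω ≤ x <;>
        simp [hX, Set.indicator_apply, hi, hj]
    have hmsij : ∀ i j : ℕ, MeasurableSet {ω | P i ω ≤ x ∧ P j ω ≤ x} := by
      intro i j
      have : {ω | P i ω ≤ x ∧ P j ω ≤ x} = {ω | P i ω ≤ x} ∩ {ω | P j ω ≤ x} := rfl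
      rw [this]; exact (hms i).inter (hms j)
    have hXmulint : ∀ i j, Integrable (fun ω => X i ω * X j ω) Pr := by
      intro i j
      rw [hXmul i j]
      exact (integrable_const (1:ℝ)).indicator (hmsij i j)
    have hXmul_integral : ∀ i j, ∫ ω, X i ω * X j ω ∂Pr =
        (Pr {ω | P i ω ≤ x ∧ P j ω ≤ x}).toReal := by
      intro i j
      rw [hXmul i j, integral_indicator_const _ (hmsij i j)]
      simp [Measure.real]
    have hX_integral : ∀ i, ∫ ω, X i ω ∂Pr = f := by
      intro i
      have : X i = Set.indicator {ω | P i ω ≤ x} (fun _ => (1:ℝ)) := by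
        funext ω; simp [hX, Set.indicator_apply]
      rw [this, integral_indicator_const _ (hms i)]
      simp [Measure.real, hcdf i x, hf]
    -- measurability of empCDF
    have hgmeas : ∀ n, Measurable (fun ω => empCDF P n ω x) := by
      intro n
      have : (fun ω => empCDF P n ω x) =
          fun ω => (∑ i ∈ Finset.range n, X i ω) / n := by
        funext ω; rw [empCDF_eq_sum]
      rw [this]
      exact (Finset.measurable_sum _ fun i _ => hXmeas i).div_const _
    -- identity for n ≥ 1
    have hidentity : ∀ n : ℕ, 1 ≤ n →
        (1 / (n : ℝ) ^ 2) * ∑ i ∈ Finset.range n, ∑ j ∈ Finset.range n,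
          (if i ≠ j then (Pr {ω | P i ω ≤ x ∧ P j ω ≤ x}).toReal - f ^ 2 else 0) =
        (∫ ω, (empCDF P n ω x - f) ^ 2 ∂Pr) - (f - f ^ 2) / n := by
      intro n hn
      have hn0 : (0:ℝ) < n := by exact_mod_cast hn
      -- compute the integral
      have hexp : ∀ ω, (empCDF P n ω x - f) ^ 2 =
          (1 / (n:ℝ) ^ 2) * ∑ i ∈ Finset.range n, ∑ j ∈ Finset.range n, X i ω * X j ω
            - (2 * f / n) * ∑ i ∈ Finset.range n, X i ω + f ^ 2 := by
        intro ω
        rw [empCDF_eq_sum, ← Finset.sum_mul_sum]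
        field_simp
        ring
      have hintsum2 : Integrable (fun ω =>
          (1 / (n:ℝ) ^ 2) * ∑ i ∈ Finset.range n, ∑ j ∈ Finset.range n, X i ω * X j ω) Pr := by
        refine Integrable.const_mul ?_ _
        exact integrable_finset_sum _ fun i _ => integrable_finset_sum _ fun j _ => hXmulint i j
      have hintsum1 : Integrable (fun ω =>
          (2 * f / n) * ∑ i ∈ Finset.range n, X i ω) Pr := by
        refine Integrable.const_mul ?_ _
        exact integrable_finset_sum _ fun i _ => hXint i
      have hIeq : ∫ ω, (empCDF P n ω x - f) ^ 2 ∂Pr =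
          (1 / (n:ℝ) ^ 2) * (∑ i ∈ Finset.range n, ∑ j ∈ Finset.range n,
            (Pr {ω | P i ω ≤ x ∧ P j ω ≤ x}).toReal) - f ^ 2 := by
        have h1 : ∫ ω, (empCDF P n ω x - f) ^ 2 ∂Pr =
            ∫ ω, ((1 / (n:ℝ) ^ 2) * ∑ i ∈ Finset.range n, ∑ j ∈ Finset.range n, X i ω * X j ω
              - (2 * f / n) * ∑ i ∈ Finset.range n, X i ω + f ^ 2) ∂Pr := by
          exact integral_congr_ae (Filter.Eventually.of_forall hexp)
        have hintsub : Integrable (fun ω =>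
            (1 / (n:ℝ) ^ 2) * ∑ i ∈ Finset.range n, ∑ j ∈ Finset.range n, X i ω * X j ω
              - (2 * f / n) * ∑ i ∈ Finset.range n, X i ω) Pr := hintsum2.sub hintsum1
        rw [h1, integral_add hintsub (integrable_const _),
          integral_sub hintsum2 hintsum1, integral_const_mul, integral_const_mul,
          integral_finset_sum _ (fun i _ => integrable_finset_sum _ fun j _ => hXmulint i j),
          integral_finset_sum _ (fun i _ => hXint i), integral_const]
        have h2 : ∀ i ∈ Finset.range n, ∫ ω, ∑ j ∈ Finset.range n, X i ω * X j ω ∂Pr =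
            ∑ j ∈ Finset.range n, (Pr {ω | P i ω ≤ x ∧ P j ω ≤ x}).toReal := by
          intro i _
          rw [integral_finset_sum _ (fun j _ => hXmulint i j)]
          exact Finset.sum_congr rfl fun j _ => hXmul_integral i j
        rw [Finset.sum_congr rfl h2, Finset.sum_congr rfl (fun i _ => hX_integral i),
          Finset.sum_const, Finset.card_range]
        simp only [Measure.real, measure_univ, ENNReal.toReal_one, smul_eq_mul, one_mul, nsmul_eq_mul]
        field_simp
        ring
      -- decompose the off-diagonal sum
      have hdiag : ∀ i : ℕ, (Pr {ω | P i ω ≤ x ∧ P i ω ≤ x}).toReal = f := by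
        intro i
        have : {ω | P i ω ≤ x ∧ P i ω ≤ x} = {ω | P i ω ≤ x} := by
          ext ω; simp
        rw [this, hcdf i x]
      have hsplit : ∑ i ∈ Finset.range n, ∑ j ∈ Finset.range n,
          (if i ≠ j then (Pr {ω | P i ω ≤ x ∧ P j ω ≤ x}).toReal - f ^ 2 else 0) =
          (∑ i ∈ Finset.range n, ∑ j ∈ Finset.range n,
            ((Pr {ω | P i ω ≤ x ∧ P j ω ≤ x}).toReal - f ^ 2)) - n * (f - f ^ 2) := by
        have hrow : ∀ i ∈ Finset.range n, ∑ j ∈ Finset.range n,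
            (if i ≠ j then (Pr {ω | P i ω ≤ x ∧ P j ω ≤ x}).toReal - f ^ 2 else 0) =
            (∑ j ∈ Finset.range n, ((Pr {ω | P i ω ≤ x ∧ P j ω ≤ x}).toReal - f ^ 2))
              - (f - f ^ 2) := by
          intro i hi
          have hterm : ∀ j : ℕ,
              (if i ≠ j then (Pr {ω | P i ω ≤ x ∧ P j ω ≤ x}).toReal - f ^ 2 else 0) =
              ((Pr {ω | P i ω ≤ x ∧ P j ω ≤ x}).toReal - f ^ 2) -
                (if i = j then (Pr {ω | P i ω ≤ x ∧ P j ω ≤ x}).toReal - f ^ 2 else 0) := by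
            intro j; by_cases h : i = j <;> simp [h]
          rw [Finset.sum_congr rfl (fun j _ => hterm j), Finset.sum_sub_distrib,
            Finset.sum_ite_eq, if_pos hi, hdiag i]
        rw [Finset.sum_congr rfl hrow, Finset.sum_sub_distrib, Finset.sum_const,
          Finset.card_range, nsmul_eq_mul]
      rw [hsplit, hIeq]
      simp only [Finset.sum_sub_distrib, Finset.sum_const, Finset.card_range, nsmul_eq_mul]
      field_simp
    -- reduce to L² convergence
    have hL2iff := tendsto_integral_sq_iff_tendstoInMeasure Pr
      (fun n ω => empCDF P n ω x) hgmeas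
      (fun n ω => empCDF_nonneg P n ω x) (fun n ω => empCDF_le_one P n ω x) f hf0 hf1
    rw [← hL2iff]
    have hsmall : Tendsto (fun n : ℕ => (f - f ^ 2) / (n:ℝ)) atTop (nhds 0) :=
      tendsto_const_nhds.div_atTop tendsto_natCast_atTop_atTop
    constructor
    · intro h
      have : Tendsto (fun n : ℕ =>
          ((1 / (n : ℝ) ^ 2) * ∑ i ∈ Finset.range n, ∑ j ∈ Finset.range n,
            (if i ≠ j then (Pr {ω | P i ω ≤ x ∧ P j ω ≤ x}).toReal - f ^ 2 else 0))
          + (f - f ^ 2) / n) atTop (nhds 0) := by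
        simpa using h.add hsmall
      refine this.congr' ?_
      filter_upwards [Filter.eventually_ge_atTop 1] with n hn
      rw [hidentity n hn]; ring
    · intro h
      have : Tendsto (fun n : ℕ =>
          (∫ ω, (empCDF P n ω x - f) ^ 2 ∂Pr) - (f - f ^ 2) / n) atTop (nhds 0) := by
        simpa using h.sub hsmall
      refine this.congr' ?_
      filter_upwards [Filter.eventually_ge_atTop 1] with n hn
      rw [hidentity n hn]
  exact forall_congr' key
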